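/- For any weighted forest G=(V,E,μ,w) with n vertices and any 1 ≤ k ≤ n, the nonlinear Courant–Fischer–Weyl minimax principle holds for the L¹-Rayleigh quotient: min over k-dimensional linear subspaces X of ℝⁿ of max_{x∈X∖{0}} Φ₁(x) equals max over (n-k+1)-dimensional linear subspaces X of ℝⁿ of min_{x∈X∖{0}} Φ₁(x), and both equal the Cheeger k-constant h_k(G). -/

import Mathlib

open Finset

variable {V : Type*}

noncomputable def bdryW [Fintype V] [DecidableEq V] (G : SimpleGraph V) [DecidableRel G.Adj]
    (w : Sym2 V → ℝ) (A : Finset V) : ℝ :=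
  ∑ u ∈ A, ∑ v ∈ Aᶜ, if G.Adj u v then w s(u, v) else 0

noncomputable def vol [Fintype V] (μ : V → ℝ) (A : Finset V) : ℝ := ∑ v ∈ A, μ v

noncomputable def phi [Fintype V] [DecidableEq V] (G : SimpleGraph V) [DecidableRel G.Adj]
    (μ : V → ℝ) (w : Sym2 V → ℝ) (A : Finset V) : ℝ := bdryW G w A / vol μ A

/-- A subpartition: a tuple of pairwise disjoint nonempty subsets of the vertex set. -/
def IsSubpartition {k : ℕ} (A : Fin k → Finset V) : Prop :=
  (∀ i, (A i).Nonempty) ∧ ∀ i j, i ≠ j → Disjoint (A i) (A j)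

/-- The Cheeger k-constant: min over subpartitions with k parts of the max expansion. -/
noncomputable def hkConst [Fintype V] [DecidableEq V] (G : SimpleGraph V) [DecidableRel G.Adj]
    (μ : V → ℝ) (w : Sym2 V → ℝ) (k : ℕ) : ℝ :=
  sInf {r | ∃ A : Fin k → Finset V, IsSubpartition A ∧
    r = sSup {s | ∃ i, s = phi G μ w (A i)}}

/-- Variant of the Cheeger k-constant where the maximum runs over all unions of parts. -/
noncomputable def hkUnion [Fintype V] [DecidableEq V] (G : SimpleGraph V) [DecidableRel G.Adj]
    (μ : V → ℝ) (w : Sym2 V → ℝ) (k : ℕ) : ℝ :=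
  sInf {r | ∃ A : Fin k → Finset V, IsSubpartition A ∧
    r = sSup {s | ∃ I : Finset (Fin k), I.Nonempty ∧ s = phi G μ w (I.biUnion A)}}

/-- The k-th max-min Cheeger constant ℓ_k. -/
noncomputable def ellk [Fintype V] [DecidableEq V] (G : SimpleGraph V) [DecidableRel G.Adj]
    (μ : V → ℝ) (w : Sym2 V → ℝ) (k : ℕ) : ℝ :=
  sSup {r | ∃ A : Fin (Fintype.card V - k + 1) → Finset V, IsSubpartition A ∧
    r = sInf {s | ∃ I : Finset (Fin (Fintype.card V - k + 1)), I.Nonempty ∧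
      s = phi G μ w (I.biUnion A)}}

/-- The Cheeger constant of a subset A: min of φ over nonempty subsets of A. -/
noncomputable def cheegerConst [Fintype V] [DecidableEq V] (G : SimpleGraph V) [DecidableRel G.Adj]
    (μ : V → ℝ) (w : Sym2 V → ℝ) (A : Finset V) : ℝ :=
  sInf {r | ∃ B : Finset V, B ⊆ A ∧ B.Nonempty ∧ r = phi G μ w B}

/-- The k-th Dirichlet Cheeger constant ℓ̲_k. -/
noncomputable def ellUnder [Fintype V] [DecidableEq V] (G : SimpleGraph V) [DecidableRel G.Adj]
    (μ : V → ℝ) (w : Sym2 V → ℝ) (k : ℕ) : ℝ :=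
  sSup {r | ∃ A : Finset V, A.card = Fintype.card V - k + 1 ∧ r = cheegerConst G μ w A}

/-- The L¹-Rayleigh quotient Φ₁. -/
noncomputable def Phi1 [Fintype V] [DecidableEq V] (G : SimpleGraph V) [DecidableRel G.Adj]
    (μ : V → ℝ) (w : Sym2 V → ℝ) (x : V → ℝ) : ℝ :=
  ((∑ u, ∑ v, if G.Adj u v then w s(u, v) * |x u - x v| else 0) / 2) / (∑ v, μ v * |x v|)

/-- The indicator vector of a finite set of vertices. -/
def indVec [DecidableEq V] (A : Finset V) : V → ℝ := fun v => if v ∈ A then 1 else 0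

set_option linter.unusedSectionVars false
set_option linter.unusedVariables false

/-! ### mediant inequalities -/

lemma CFmediant_le {a b c d : ℝ} (hb : 0 < b) (hd : 0 < d) :
    (a + c) / (b + d) ≤ max (a / b) (c / d) := by
  rw [div_le_iff₀ (by linarith)]
  have h1 : a = (a / b) * b := by field_simp
  have h1' : a ≤ max (a / b) (c / d) * b :=
    h1.le.trans (mul_le_mul_of_nonneg_right (le_max_left _ _) hb.le)
  have h2 : c = (c / d) * d := by field_simp
  have h2' : c ≤ max (a / b) (c / d) * d :=
    h2.le.trans (mul_le_mul_of_nonneg_right (le_max_right _ _) hd.le)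
  nlinarith

lemma CFle_mediant {a b c d : ℝ} (hb : 0 < b) (hd : 0 < d) :
    min (a / b) (c / d) ≤ (a + c) / (b + d) := by
  rw [le_div_iff₀ (by linarith)]
  have h1 : a = (a / b) * b := by field_simp
  have h1' : min (a / b) (c / d) * b ≤ a :=
    le_trans (mul_le_mul_of_nonneg_right (min_le_left _ _) hb.le) h1.ge
  have h2 : c = (c / d) * d := by field_simp
  have h2' : min (a / b) (c / d) * d ≤ c :=
    le_trans (mul_le_mul_of_nonneg_right (min_le_right _ _) hd.le) h2.ge
  nlinarith

section Basic
variable [Fintype V] [DecidableEq V] (G : SimpleGraph V) [DecidableRel G.Adj]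
  (μ : V → ℝ) (w : Sym2 V → ℝ)

noncomputable def CFnum (x : V → ℝ) : ℝ :=
  ∑ u, ∑ v, if G.Adj u v then w s(u, v) * |x u - x v| else 0
noncomputable def CFden (x : V → ℝ) : ℝ := ∑ v, μ v * |x v|

lemma CFPhi1_eq (x : V → ℝ) : Phi1 G μ w x = (CFnum G w x / 2) / CFden μ x := rfl

variable {G μ w}

lemma CFvol_pos (hμ : ∀ v, 0 < μ v) {A : Finset V} (hA : A.Nonempty) : 0 < vol μ A :=
  Finset.sum_pos (fun v _ => hμ v) hA

lemma CFvol_nonneg (hμ : ∀ v, 0 < μ v) (A : Finset V) : 0 ≤ vol μ A :=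
  Finset.sum_nonneg fun v _ => (hμ v).le

lemma CFw_adj_pos (hw : ∀ e ∈ G.edgeSet, 0 < w e) {u v : V} (h : G.Adj u v) :
    0 < w s(u, v) := hw _ (by rwa [SimpleGraph.mem_edgeSet])

lemma CFbdryW_nonneg (hw : ∀ e ∈ G.edgeSet, 0 < w e) (A : Finset V) : 0 ≤ bdryW G w A := by
  refine Finset.sum_nonneg fun u _ => Finset.sum_nonneg fun v _ => ?_
  split
  · exact (CFw_adj_pos hw (by assumption)).le
  · exact le_refl 0

lemma CFphi_nonneg (hμ : ∀ v, 0 < μ v) (hw : ∀ e ∈ G.edgeSet, 0 < w e) (A : Finset V) :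
    0 ≤ phi G μ w A :=
  div_nonneg (CFbdryW_nonneg hw A) (CFvol_nonneg hμ A)

lemma CFden_pos (hμ : ∀ v, 0 < μ v) {x : V → ℝ} (hx : x ≠ 0) : 0 < CFden μ x := by
  obtain ⟨v, hv⟩ : ∃ v, x v ≠ 0 := by
    by_contra h; push_neg at h; exact hx (funext fun v => h v)
  refine Finset.sum_pos' (fun i _ => mul_nonneg (hμ i).le (abs_nonneg _))
    ⟨v, Finset.mem_univ v, mul_pos (hμ v) (abs_pos.2 hv)⟩

lemma CFden_nonneg (hμ : ∀ v, 0 < μ v) (x : V → ℝ) : 0 ≤ CFden μ x :=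
  Finset.sum_nonneg fun v _ => mul_nonneg (hμ v).le (abs_nonneg _)

lemma CFnum_nonneg (hw : ∀ e ∈ G.edgeSet, 0 < w e) (x : V → ℝ) : 0 ≤ CFnum G w x := by
  refine Finset.sum_nonneg fun u _ => Finset.sum_nonneg fun v _ => ?_
  split
  · have h1 := CFw_adj_pos hw (by assumption)
    positivity
  · exact le_refl 0

lemma CFPhi1_nonneg (hμ : ∀ v, 0 < μ v) (hw : ∀ e ∈ G.edgeSet, 0 < w e) (x : V → ℝ) :
    0 ≤ Phi1 G μ w x := by
  rw [CFPhi1_eq]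
  have h1 := CFnum_nonneg hw x
  have h2 := CFden_nonneg hμ x
  positivity

/-- swap the two summation variables in an adjacency-weighted double sum -/
lemma CFsum_swap (S T : Finset V) (f : V → V → ℝ) :
    ∑ u ∈ S, ∑ v ∈ T, (if G.Adj u v then w s(u, v) * f u v else 0)
      = ∑ u ∈ T, ∑ v ∈ S, (if G.Adj u v then w s(u, v) * f v u else 0) := by
  rw [Finset.sum_comm]
  refine Finset.sum_congr rfl fun u _ => Finset.sum_congr rfl fun v _ => ?_
  by_cases h : G.Adj u v
  · rw [if_pos h, if_pos h.symm, Sym2.eq_swap]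
  · rw [if_neg h, if_neg fun h' => h h'.symm]

lemma CFbdry_sum_swap (S T : Finset V) :
    ∑ u ∈ S, ∑ v ∈ T, (if G.Adj u v then w s(u, v) else 0)
      = ∑ u ∈ T, ∑ v ∈ S, (if G.Adj u v then w s(u, v) else 0) := by
  have h := CFsum_swap (G := G) (w := w) S T (fun _ _ => 1)
  simpa using h

lemma CFbdry_half {A B : Finset V} (hAB : Disjoint A B)
    (hno : ∀ u ∈ A, ∀ v ∈ B, ¬ G.Adj u v) :
    ∑ u ∈ A, ∑ v ∈ (A ∪ B)ᶜ, (if G.Adj u v then w s(u, v) else 0) = bdryW G w A := by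
  have hA : Aᶜ = (A ∪ B)ᶜ ∪ B := by
    ext v
    simp only [Finset.mem_compl, Finset.mem_union]
    constructor
    · intro hv
      by_cases hB : v ∈ B
      · exact Or.inr hB
      · exact Or.inl (by tauto)
    · rintro (h | h)
      · tauto
      · exact fun hv => (Finset.disjoint_left.1 hAB hv) h
  have hdisj : Disjoint ((A ∪ B)ᶜ) B := Finset.disjoint_left.2 fun v hv hv2 =>
    (Finset.mem_compl.1 hv) (Finset.mem_union.2 (Or.inr hv2))
  unfold bdryW
  rw [hA]
  refine (Finset.sum_congr rfl fun u hu => ?_).symm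
  rw [Finset.sum_union hdisj, Finset.sum_eq_zero (fun v hv => if_neg (hno u hu v hv)), add_zero]

/-- splitting the boundary over two pieces with no edges between them -/
lemma CFbdryW_split {A B : Finset V} (hAB : Disjoint A B)
    (hno : ∀ u ∈ A, ∀ v ∈ B, ¬ G.Adj u v) :
    bdryW G w (A ∪ B) = bdryW G w A + bdryW G w B := by
  have h1 := CFbdry_half (G := G) (w := w) hAB hno
  have h2 := CFbdry_half (G := G) (w := w) hAB.symm (fun u hu v hv hadj => hno v hv u hu hadj.symm)
  rw [Finset.union_comm B A] at h2
  unfold bdryW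
  rw [Finset.sum_union hAB, h1, h2]
  rfl

lemma CFvol_union {A B : Finset V} (hAB : Disjoint A B) :
    vol μ (A ∪ B) = vol μ A + vol μ B := Finset.sum_union hAB

lemma CFbdryW_union_le (hw : ∀ e ∈ G.edgeSet, 0 < w e) {A B : Finset V} (hAB : Disjoint A B) :
    bdryW G w (A ∪ B) ≤ bdryW G w A + bdryW G w B := by
  unfold bdryW
  rw [Finset.sum_union hAB]
  have key : ∀ C : Finset V, C ⊆ A ∪ B →
      (∑ u ∈ C, ∑ v ∈ (A ∪ B)ᶜ, if G.Adj u v then w s(u, v) else 0)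
        ≤ ∑ u ∈ C, ∑ v ∈ Cᶜ, if G.Adj u v then w s(u, v) else 0 := by
    intro C hC
    refine Finset.sum_le_sum fun u _ => ?_
    refine Finset.sum_le_sum_of_subset_of_nonneg (Finset.compl_subset_compl.2 hC) ?_
    intro v _ _
    split
    · exact (CFw_adj_pos hw (by assumption)).le
    · exact le_refl 0
  exact add_le_add (key A Finset.subset_union_left) (key B Finset.subset_union_right)

/-- φ of a disjoint union with positive volumes is at most the max -/
lemma CFphi_union_le_max (hμ : ∀ v, 0 < μ v) (hw : ∀ e ∈ G.edgeSet, 0 < w e)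
    {A B : Finset V} (hAB : Disjoint A B) (hA : A.Nonempty) (hB : B.Nonempty) :
    phi G μ w (A ∪ B) ≤ max (phi G μ w A) (phi G μ w B) := by
  have hvA := CFvol_pos hμ hA
  have hvB := CFvol_pos hμ hB
  have h1 : phi G μ w (A ∪ B) ≤ (bdryW G w A + bdryW G w B) / (vol μ A + vol μ B) := by
    unfold phi
    rw [CFvol_union hAB]
    refine div_le_div₀ ?_ (CFbdryW_union_le hw hAB) (by linarith) (le_refl _)
    have := CFbdryW_nonneg hw A; have := CFbdryW_nonneg hw B; linarith
  exact h1.trans (CFmediant_le hvA hvB)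

lemma CFle_phi_union (hμ : ∀ v, 0 < μ v)
    {A B : Finset V} (hAB : Disjoint A B) (hA : A.Nonempty) (hB : B.Nonempty)
    (hno : ∀ u ∈ A, ∀ v ∈ B, ¬ G.Adj u v) :
    min (phi G μ w A) (phi G μ w B) ≤ phi G μ w (A ∪ B) := by
  have hvA := CFvol_pos hμ hA
  have hvB := CFvol_pos hμ hB
  unfold phi
  rw [CFvol_union hAB, CFbdryW_split hAB hno]
  exact CFle_mediant hvA hvB

/-- φ of a union of parts of a subpartition is bounded by the bound on parts -/
lemma CFphi_biUnion_le {ι : Type*} [DecidableEq ι] {A : ι → Finset V} (hμ : ∀ v, 0 < μ v)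
    (hw : ∀ e ∈ G.edgeSet, 0 < w e)
    (hne : ∀ i, (A i).Nonempty) (hd : ∀ i j, i ≠ j → Disjoint (A i) (A j))
    {r : ℝ} (hr : ∀ i, phi G μ w (A i) ≤ r) :
    ∀ I : Finset ι, I.Nonempty → phi G μ w (I.biUnion A) ≤ r := by
  intro I hI
  induction hI using Finset.Nonempty.cons_induction with
  | singleton i => simpa using hr i
  | cons i I hiI hIne ih =>
      rw [Finset.cons_eq_insert, Finset.biUnion_insert]
      have hdisj : Disjoint (A i) (I.biUnion A) := by
        rw [Finset.disjoint_biUnion_right]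
        exact fun j hj => hd i j (fun h => hiI (h ▸ hj))
      have hbu : (I.biUnion A).Nonempty := by
        obtain ⟨j, hj⟩ := hIne
        obtain ⟨v, hv⟩ := hne j
        exact ⟨v, Finset.mem_biUnion.2 ⟨j, hj, hv⟩⟩
      have hm := CFphi_union_le_max (hμ := hμ) (hw := hw) hdisj (hne i) hbu
      exact hm.trans (max_le (hr i) ih)

end Basic

section Layer
variable [Fintype V] [DecidableEq V] {G : SimpleGraph V} [DecidableRel G.Adj]
  {μ : V → ℝ} {w : Sym2 V → ℝ}

lemma CFabs_split (a b : ℝ) :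
    |a - b| = |max a 0 - max b 0| + |max (-a) 0 - max (-b) 0| := by
  rcases le_total a 0 with ha | ha <;> rcases le_total b 0 with hb | hb
  · rw [max_eq_right ha, max_eq_right hb, max_eq_left (neg_nonneg.2 ha),
      max_eq_left (neg_nonneg.2 hb)]
    simp only [sub_self, abs_zero, neg_sub_neg]
    rw [abs_sub_comm a b]; ring
  · rw [max_eq_right ha, max_eq_left hb, max_eq_left (neg_nonneg.2 ha),
      max_eq_right (neg_nonpos.2 hb)]
    simp only [zero_sub, sub_zero, abs_neg]
    rw [abs_of_nonpos (show a - b ≤ 0 by linarith), abs_of_nonneg hb, abs_of_nonpos ha]; ring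
  · rw [max_eq_left ha, max_eq_right hb, max_eq_right (neg_nonpos.2 ha),
      max_eq_left (neg_nonneg.2 hb)]
    simp only [zero_sub, sub_zero, abs_neg]
    rw [abs_of_nonneg (show (0:ℝ) ≤ a - b by linarith), abs_of_nonneg ha, abs_of_nonpos hb]; ring
  · rw [max_eq_left ha, max_eq_left hb, max_eq_right (neg_nonpos.2 ha),
      max_eq_right (neg_nonpos.2 hb)]
    simp only [sub_self, abs_zero]
    ring

lemma CFabs_posneg (a : ℝ) : |a| = max a 0 + max (-a) 0 := by
  rcases le_total a 0 with ha | ha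
  · rw [max_eq_right ha, max_eq_left (neg_nonneg.2 ha), abs_of_nonpos ha]; ring
  · rw [max_eq_left ha, max_eq_right (neg_nonpos.2 ha), abs_of_nonneg ha]; ring

lemma CFpos_sub_neg (a : ℝ) : max a 0 - max (-a) 0 = a := by
  rcases le_total a 0 with ha | ha
  · rw [max_eq_right ha, max_eq_left (neg_nonneg.2 ha)]; ring
  · rw [max_eq_left ha, max_eq_right (neg_nonpos.2 ha)]; ring

lemma CFnum_posneg (x : V → ℝ) :
    CFnum G w x = CFnum G w (fun v => max (x v) 0) + CFnum G w (fun v => max (-(x v)) 0) := by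
  unfold CFnum
  rw [← Finset.sum_add_distrib]
  refine Finset.sum_congr rfl fun u _ => ?_
  rw [← Finset.sum_add_distrib]
  refine Finset.sum_congr rfl fun v _ => ?_
  by_cases h : G.Adj u v
  · simp only [if_pos h]
    rw [CFabs_split (x u) (x v)]; ring
  · simp [h]

lemma CFden_posneg (x : V → ℝ) :
    CFden μ x = CFden μ (fun v => max (x v) 0) + CFden μ (fun v => max (-(x v)) 0) := by
  unfold CFden
  rw [← Finset.sum_add_distrib]
  refine Finset.sum_congr rfl fun v _ => ?_
  have h0 : (0:ℝ) ≤ max (x v) 0 := le_max_right _ _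
  have h1 : (0:ℝ) ≤ max (-(x v)) 0 := le_max_right _ _
  rw [abs_of_nonneg h0, abs_of_nonneg h1, CFabs_posneg (x v)]; ring

lemma CFnum_zero : CFnum G w (0 : V → ℝ) = 0 := by
  unfold CFnum
  refine Finset.sum_eq_zero fun u _ => Finset.sum_eq_zero fun v _ => ?_
  simp

lemma CFden_zero : CFden μ (0 : V → ℝ) = 0 := by
  unfold CFden; simp

/-- num of an indicator equals twice the boundary -/
lemma CFnum_indVec (T : Finset V) : CFnum G w (indVec T) = 2 * bdryW G w T := by
  have block : ∀ (S₁ S₂ : Finset V) (c : ℝ), (∀ u ∈ S₁, ∀ v ∈ S₂, |indVec T u - indVec T v| = c) →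
      ∑ u ∈ S₁, ∑ v ∈ S₂, (if G.Adj u v then w s(u, v) * |indVec T u - indVec T v| else 0)
        = c * ∑ u ∈ S₁, ∑ v ∈ S₂, (if G.Adj u v then w s(u, v) else 0) := by
    intro S₁ S₂ c hc
    rw [Finset.mul_sum]
    refine Finset.sum_congr rfl fun u hu => ?_
    rw [Finset.mul_sum]
    refine Finset.sum_congr rfl fun v hv => ?_
    rw [hc u hu v hv]
    split <;> ring
  unfold CFnum
  have split2 : ∀ f : V → V → ℝ, (∑ u, ∑ v, f u v)
      = ((∑ u ∈ T, ∑ v ∈ T, f u v) + ∑ u ∈ T, ∑ v ∈ Tᶜ, f u v)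
        + ((∑ u ∈ Tᶜ, ∑ v ∈ T, f u v) + ∑ u ∈ Tᶜ, ∑ v ∈ Tᶜ, f u v) := by
    intro f
    rw [← Finset.sum_add_sum_compl T (fun u => ∑ v, f u v)]
    congr 1
    · exact (Finset.sum_congr rfl fun u _ => (Finset.sum_add_sum_compl T (f u)).symm).trans
        Finset.sum_add_distrib
    · exact (Finset.sum_congr rfl fun u _ => (Finset.sum_add_sum_compl T (f u)).symm).trans
        Finset.sum_add_distrib
  rw [split2]
  rw [block T T 0 (fun u hu v hv => by simp [indVec, hu, hv]),
      block T Tᶜ 1 (fun u hu v hv => by simp [indVec, hu, Finset.mem_compl.1 hv]),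
      block Tᶜ T 1 (fun u hu v hv => by simp [indVec, hv, Finset.mem_compl.1 hu]),
      block Tᶜ Tᶜ 0 (fun u hu v hv => by
        simp [indVec, Finset.mem_compl.1 hu, Finset.mem_compl.1 hv])]
  rw [CFbdry_sum_swap (G := G) (w := w) Tᶜ T]
  unfold bdryW
  ring

/-- num of a function written as y plus a layer over T -/
lemma CFnum_decomp {x y : V → ℝ} {T : Finset V} {c : ℝ}
    (h : ∀ u v, G.Adj u v → |x u - x v|
      = |y u - y v| + c * |indVec T u - indVec T v|) :
    CFnum G w x = CFnum G w y + c * (2 * bdryW G w T) := by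
  have key : CFnum G w x = CFnum G w y + c * CFnum G w (indVec T) := by
    unfold CFnum
    rw [Finset.mul_sum, ← Finset.sum_add_distrib]
    refine Finset.sum_congr rfl fun u _ => ?_
    rw [Finset.mul_sum, ← Finset.sum_add_distrib]
    refine Finset.sum_congr rfl fun v _ => ?_
    by_cases hadj : G.Adj u v
    · simp only [if_pos hadj]
      rw [h u v hadj]; ring
    · simp [hadj]
  rw [key, CFnum_indVec]

lemma CFden_decomp {x y : V → ℝ} {T : Finset V} {c : ℝ}
    (h : ∀ v, |x v| = |y v| + c * (if v ∈ T then 1 else 0)) :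
    CFden μ x = CFden μ y + c * vol μ T := by
  have hvol : vol μ T = ∑ v, (if v ∈ T then μ v else 0) := by
    rw [Finset.sum_ite_mem, Finset.univ_inter]; rfl
  unfold CFden
  rw [hvol, Finset.mul_sum, ← Finset.sum_add_distrib]
  refine Finset.sum_congr rfl fun v _ => ?_
  rw [h v]
  split <;> ring

end Layer

section LayerMain
variable [Fintype V] [DecidableEq V] {G : SimpleGraph V} [DecidableRel G.Adj]
  {μ : V → ℝ} {w : Sym2 V → ℝ}

lemma CFlayer (hμ : ∀ v, 0 < μ v) (hw : ∀ e ∈ G.edgeSet, 0 < w e) :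
    ∀ (n : ℕ) (x : V → ℝ), ((Finset.univ.filter (fun v => 0 < x v)).image x).card ≤ n →
    (∀ v, 0 ≤ x v) → x ≠ 0 → ∀ (r h : ℝ),
    (∀ c : ℝ, 0 < c → (Finset.univ.filter (fun v => c ≤ x v)).Nonempty →
      phi G μ w (Finset.univ.filter (fun v => c ≤ x v)) ≤ r) →
    (∀ c : ℝ, 0 < c → (Finset.univ.filter (fun v => c ≤ x v)).Nonempty →
      h ≤ phi G μ w (Finset.univ.filter (fun v => c ≤ x v))) →
    h ≤ Phi1 G μ w x ∧ Phi1 G μ w x ≤ r := by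
  intro n
  induction n with
  | zero =>
    intro x hcard hx0 hxne r h hr hh
    exfalso
    obtain ⟨v, hv⟩ : ∃ v, x v ≠ 0 := by
      by_contra hcon; push_neg at hcon; exact hxne (funext fun v => hcon v)
    have hpos : 0 < x v := lt_of_le_of_ne (hx0 v) (Ne.symm hv)
    have hmem : x v ∈ (Finset.univ.filter (fun v => 0 < x v)).image x :=
      Finset.mem_image.2 ⟨v, Finset.mem_filter.2 ⟨Finset.mem_univ v, hpos⟩, rfl⟩
    have := Finset.card_pos.2 ⟨x v, hmem⟩
    omega
  | succ n ih =>
    intro x hcard hx0 hxne r h hr hh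
    set S : Finset ℝ := (Finset.univ.filter (fun v => 0 < x v)).image x with hSdef
    obtain ⟨v₀, hv₀⟩ : ∃ v, x v ≠ 0 := by
      by_contra hcon; push_neg at hcon; exact hxne (funext fun v => hcon v)
    have hv₀pos : 0 < x v₀ := lt_of_le_of_ne (hx0 v₀) (Ne.symm hv₀)
    have hSne : S.Nonempty :=
      ⟨x v₀, Finset.mem_image.2 ⟨v₀, Finset.mem_filter.2 ⟨Finset.mem_univ _, hv₀pos⟩, rfl⟩⟩
    set M : ℝ := S.max' hSne with hMdef
    have hMS : M ∈ S := S.max'_mem hSne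
    obtain ⟨vM, hvM, hvMx⟩ := Finset.mem_image.1 hMS
    have hvMpos : 0 < x vM := (Finset.mem_filter.1 hvM).2
    have hMpos : 0 < M := hvMx ▸ hvMpos
    have hxleM : ∀ v, x v ≤ M := by
      intro v
      rcases eq_or_lt_of_le (hx0 v) with hz | hz
      · linarith
      · exact S.le_max' _ (Finset.mem_image.2 ⟨v, Finset.mem_filter.2 ⟨Finset.mem_univ _, hz⟩, rfl⟩)
    set T : Finset V := Finset.univ.filter (fun v => M ≤ x v) with hTdef
    have hTmem : ∀ v, v ∈ T ↔ x v = M := by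
      intro v
      simp only [hTdef, Finset.mem_filter, Finset.mem_univ, true_and]
      exact ⟨fun hle => le_antisymm (hxleM v) hle, fun he => he.ge⟩
    have hTne : T.Nonempty := ⟨vM, (hTmem vM).2 hvMx⟩
    have hphiT := And.intro (hh M hMpos hTne) (hr M hMpos hTne)
    rw [← hTdef] at hphiT
    set S' : Finset ℝ := S.erase M with hS'def
    set m2 : ℝ := if hS' : S'.Nonempty then S'.max' hS' else 0 with hm2def
    have hm2nn : 0 ≤ m2 := by
      rw [hm2def]
      split
      · rename_i hS'
        have hmem := S'.max'_mem hS'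
        have : S'.max' hS' ∈ S := Finset.mem_of_mem_erase hmem
        obtain ⟨v, hv, hvx⟩ := Finset.mem_image.1 this
        have := (Finset.mem_filter.1 hv).2
        linarith
      · exact le_refl 0
    have hm2M : m2 < M := by
      rw [hm2def]
      split
      · rename_i hS'
        have hmem := S'.max'_mem hS'
        have hne : S'.max' hS' ≠ M := Finset.ne_of_mem_erase hmem
        have hle : S'.max' hS' ≤ M := S.le_max' _ (Finset.mem_of_mem_erase hmem)
        exact lt_of_le_of_ne hle hne
      · exact hMpos
    have hup : ∀ v, v ∉ T → x v ≤ m2 := by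
      intro v hv
      have hvM' : x v ≠ M := fun he => hv ((hTmem v).2 he)
      rcases eq_or_lt_of_le (hx0 v) with hz | hz
      · linarith
      · have hmemS : x v ∈ S :=
          Finset.mem_image.2 ⟨v, Finset.mem_filter.2 ⟨Finset.mem_univ _, hz⟩, rfl⟩
        have hmemS' : x v ∈ S' := Finset.mem_erase.2 ⟨hvM', hmemS⟩
        have hS'ne : S'.Nonempty := ⟨x v, hmemS'⟩
        rw [hm2def, dif_pos hS'ne]
        exact S'.le_max' _ hmemS'
    set y : V → ℝ := fun v => min (x v) m2 with hydef
    have hyval : ∀ v, v ∈ T → y v = m2 := by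
      intro v hv
      rw [hydef]
      exact min_eq_right (((hTmem v).1 hv) ▸ hm2M.le)
    have hyval' : ∀ v, v ∉ T → y v = x v := fun v hv => min_eq_left (hup v hv)
    have hy0 : ∀ v, 0 ≤ y v := fun v => le_min (hx0 v) hm2nn
    -- decompositions
    have hnumd : CFnum G w x = CFnum G w y + (M - m2) * (2 * bdryW G w T) := by
      refine CFnum_decomp fun u v hadj => ?_
      by_cases hu : u ∈ T <;> by_cases hv : v ∈ T
      · rw [(hTmem u).1 hu, (hTmem v).1 hv, hyval u hu, hyval v hv]
        simp [indVec, hu, hv]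
      · rw [(hTmem u).1 hu, hyval u hu, hyval' v hv]
        have h1 : x v ≤ m2 := hup v hv
        rw [abs_of_nonneg (by linarith), abs_of_nonneg (by linarith)]
        simp only [indVec, if_pos hu, if_neg hv]
        rw [abs_of_nonneg (by norm_num)]
        ring
      · rw [(hTmem v).1 hv, hyval v hv, hyval' u hu]
        have h1 : x u ≤ m2 := hup u hu
        rw [abs_of_nonpos (by linarith), abs_of_nonpos (by linarith)]
        simp only [indVec, if_pos hv, if_neg hu]
        rw [abs_of_nonpos (by norm_num)]
        ring
      · rw [hyval' u hu, hyval' v hv]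
        simp [indVec, hu, hv]
    have hdend : CFden μ x = CFden μ y + (M - m2) * vol μ T := by
      refine CFden_decomp fun v => ?_
      by_cases hv : v ∈ T
      · rw [(hTmem v).1 hv, hyval v hv, if_pos hv,
          abs_of_nonneg hMpos.le, abs_of_nonneg hm2nn]
        ring
      · rw [hyval' v hv, if_neg hv]; ring
    have hvolT : 0 < vol μ T := CFvol_pos hμ hTne
    have hbT : 0 ≤ bdryW G w T := CFbdryW_nonneg hw T
    have hc : 0 < M - m2 := by linarith
    by_cases hy : y = 0
    · -- single level : Phi1 x = phi T
      rw [hy] at hnumd hdend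
      rw [CFnum_zero] at hnumd
      rw [CFden_zero] at hdend
      have hPhi : Phi1 G μ w x = phi G μ w T := by
        rw [CFPhi1_eq, hnumd, hdend]
        rw [zero_add, zero_add]
        have : (M - m2) * (2 * bdryW G w T) / 2 = (M - m2) * bdryW G w T := by ring
        rw [this, mul_div_mul_left _ _ (ne_of_gt hc)]
        rfl
      rw [hPhi]
      exact hphiT
    · -- use induction on y
      have hyS : ((Finset.univ.filter (fun v => 0 < y v)).image y) ⊆ S' := by
        intro c hc'
        obtain ⟨v, hv, hvy⟩ := Finset.mem_image.1 hc'
        have hyvpos : 0 < y v := (Finset.mem_filter.1 hv).2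
        have hxvpos : 0 < x v := lt_of_lt_of_le hyvpos (min_le_left _ _)
        have hm2pos : 0 < m2 := lt_of_lt_of_le hyvpos (min_le_right _ _)
        have hS'ne : S'.Nonempty := by
          by_contra hcon
          rw [hm2def, dif_neg hcon] at hm2pos
          exact lt_irrefl 0 hm2pos
        rcases le_total (x v) m2 with hle | hle
        · have : y v = x v := min_eq_left hle
          rw [← hvy, this]
          refine Finset.mem_erase.2 ⟨by linarith, ?_⟩
          exact Finset.mem_image.2 ⟨v, Finset.mem_filter.2 ⟨Finset.mem_univ _, hxvpos⟩, rfl⟩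
        · have : y v = m2 := min_eq_right hle
          rw [← hvy, this, hm2def, dif_pos hS'ne]
          exact S'.max'_mem hS'ne
      have hycard : ((Finset.univ.filter (fun v => 0 < y v)).image y).card ≤ n := by
        have h1 : S'.card = S.card - 1 := Finset.card_erase_of_mem hMS
        have h2 : 1 ≤ S.card := Finset.card_pos.2 hSne
        have h3 := Finset.card_le_card hyS
        omega
      have hylev : ∀ c : ℝ, 0 < c → (Finset.univ.filter (fun v => c ≤ y v)).Nonempty →
          Finset.univ.filter (fun v => c ≤ y v) = Finset.univ.filter (fun v => c ≤ x v) := by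
        intro c hcpos hne
        rcases le_or_gt c m2 with hle | hlt
        · ext v
          simp only [Finset.mem_filter, Finset.mem_univ, true_and, hydef, le_min_iff]
          exact ⟨fun ⟨h1, _⟩ => h1, fun h1 => ⟨h1, hle⟩⟩
        · exfalso
          obtain ⟨v, hv⟩ := hne
          have := (Finset.mem_filter.1 hv).2
          have : c ≤ m2 := le_trans this (min_le_right _ _)
          linarith
      have ihy := ih y hycard hy0 hy r h
        (fun c hcpos hne => by rw [hylev c hcpos hne]; exact hr c hcpos (hylev c hcpos hne ▸ hne))
        (fun c hcpos hne => by rw [hylev c hcpos hne]; exact hh c hcpos (hylev c hcpos hne ▸ hne))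
      -- mediant combination
      have hdy : 0 < CFden μ y := CFden_pos hμ hy
      have hb2 : 0 < (M - m2) * vol μ T := mul_pos hc hvolT
      have hsum : Phi1 G μ w x
          = (CFnum G w y / 2 + (M - m2) * bdryW G w T) / (CFden μ y + (M - m2) * vol μ T) := by
        rw [CFPhi1_eq, hnumd, hdend]
        congr 1
        ring
      have hratio : ((M - m2) * bdryW G w T) / ((M - m2) * vol μ T) = phi G μ w T := by
        rw [mul_div_mul_left _ _ (ne_of_gt hc)]; rfl
      constructor
      · rw [hsum]
        have := CFle_mediant (a := CFnum G w y / 2) (c := (M - m2) * bdryW G w T) hdy hb2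
        rw [hratio] at this
        refine le_trans (le_min ihy.1 hphiT.1) (le_trans ?_ this)
        exact le_of_eq (by rw [CFPhi1_eq])
      · rw [hsum]
        have := CFmediant_le (a := CFnum G w y / 2) (c := (M - m2) * bdryW G w T) hdy hb2
        rw [hratio] at this
        refine le_trans this (max_le ?_ hphiT.2)
        exact le_of_eq (by rw [CFPhi1_eq]) |>.trans ihy.2

end LayerMain

section Split
variable [Fintype V] [DecidableEq V] {G : SimpleGraph V} [DecidableRel G.Adj]
  {μ : V → ℝ} {w : Sym2 V → ℝ}

lemma CFPhi1_split (hμ : ∀ v, 0 < μ v) {x : V → ℝ} (hx : x ≠ 0) {r h : ℝ}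
    (hpq : ∀ z : V → ℝ, z ≠ 0 →
      (z = (fun v => max (x v) 0) ∨ z = (fun v => max (-(x v)) 0)) →
      h ≤ Phi1 G μ w z ∧ Phi1 G μ w z ≤ r) :
    h ≤ Phi1 G μ w x ∧ Phi1 G μ w x ≤ r := by
  set p : V → ℝ := fun v => max (x v) 0 with hpdef
  set q : V → ℝ := fun v => max (-(x v)) 0 with hqdef
  have hx_eq : ∀ v, x v = p v - q v := fun v => (CFpos_sub_neg (x v)).symm
  have hnum := CFnum_posneg (G := G) (w := w) x
  have hden := CFden_posneg (μ := μ) x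
  rw [← hpdef, ← hqdef] at hnum hden
  by_cases hp0 : p = 0
  · have hq0 : q ≠ 0 := by
      intro hq0; apply hx; funext v
      have h2 := hx_eq v; rw [hp0, hq0] at h2; simpa using h2
    have hPQ := hpq q hq0 (Or.inr rfl)
    have heq : Phi1 G μ w x = Phi1 G μ w q := by
      rw [CFPhi1_eq, CFPhi1_eq, hnum, hden, hp0, CFnum_zero, CFden_zero, zero_add, zero_add]
    rw [heq]; exact hPQ
  · by_cases hq0 : q = 0
    · have hPQ := hpq p hp0 (Or.inl rfl)
      have heq : Phi1 G μ w x = Phi1 G μ w p := by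
        rw [CFPhi1_eq, CFPhi1_eq, hnum, hden, hq0, CFnum_zero, CFden_zero, add_zero, add_zero]
      rw [heq]; exact hPQ
    · have hP := hpq p hp0 (Or.inl rfl)
      have hQ := hpq q hq0 (Or.inr rfl)
      have hdp : 0 < CFden μ p := CFden_pos hμ hp0
      have hdq : 0 < CFden μ q := CFden_pos hμ hq0
      have hx' : Phi1 G μ w x
          = (CFnum G w p / 2 + CFnum G w q / 2) / (CFden μ p + CFden μ q) := by
        rw [CFPhi1_eq, hnum, hden]; congr 1; ring
      have hPp : Phi1 G μ w p = (CFnum G w p / 2) / CFden μ p := CFPhi1_eq G μ w p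
      have hPq : Phi1 G μ w q = (CFnum G w q / 2) / CFden μ q := CFPhi1_eq G μ w q
      constructor
      · rw [hx']
        refine le_trans (le_min hP.1 hQ.1) ?_
        rw [hPp, hPq]
        exact CFle_mediant hdp hdq
      · rw [hx']
        refine le_trans (CFmediant_le hdp hdq) ?_
        rw [← hPp, ← hPq]
        exact max_le hP.2 hQ.2

lemma CFspan_values {ι : Type*} [Fintype ι] {A : ι → Finset V}
    (hd : ∀ i j, i ≠ j → Disjoint (A i) (A j)) {x : V → ℝ}
    (hx : x ∈ Submodule.span ℝ (Set.range (fun i => indVec (A i)))) :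
    ∃ c : ι → ℝ, (∀ j, ∀ v ∈ A j, x v = c j) ∧ (∀ v, (∀ j, v ∉ A j) → x v = 0) := by
  obtain ⟨c, hc⟩ := (Submodule.mem_span_range_iff_exists_fun ℝ).1 hx
  refine ⟨c, ?_, ?_⟩
  · intro j v hv
    have h1 := congrFun hc v
    rw [Finset.sum_apply] at h1
    simp only [Pi.smul_apply, smul_eq_mul] at h1
    rw [← h1]
    rw [Finset.sum_eq_single j]
    · simp [indVec, hv]
    · intro i _ hij
      have : v ∉ A i := Finset.disjoint_right.1 (hd i j hij) hv
      simp [indVec, this]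
    · intro hj; exact absurd (Finset.mem_univ j) hj
  · intro v hv
    have h1 := congrFun hc v
    rw [Finset.sum_apply] at h1
    simp only [Pi.smul_apply, smul_eq_mul] at h1
    rw [← h1]
    refine Finset.sum_eq_zero fun i _ => ?_
    simp [indVec, hv i]

lemma CFsuperlevel_biUnion {ι : Type*} [Fintype ι] [DecidableEq ι] {A : ι → Finset V}
    {d : ι → ℝ} {z : V → ℝ}
    (hz : ∀ j, ∀ v ∈ A j, z v = d j) (hz0 : ∀ v, (∀ j, v ∉ A j) → z v = 0)
    {c : ℝ} (hc : 0 < c) :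
    Finset.univ.filter (fun v => c ≤ z v)
      = (Finset.univ.filter (fun i => c ≤ d i)).biUnion A := by
  ext v
  constructor
  · intro hv
    have hcz : c ≤ z v := (Finset.mem_filter.1 hv).2
    refine Finset.mem_biUnion.2 ?_
    by_cases hall : ∀ j, v ∉ A j
    · rw [hz0 v hall] at hcz; linarith
    · push_neg at hall; obtain ⟨j, hj⟩ := hall
      exact ⟨j, Finset.mem_filter.2 ⟨Finset.mem_univ _, by rw [← hz j v hj]; exact hcz⟩, hj⟩
  · intro hv
    obtain ⟨j, hjI, hjv⟩ := Finset.mem_biUnion.1 hv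
    refine Finset.mem_filter.2 ⟨Finset.mem_univ _, ?_⟩
    rw [hz j v hjv]
    exact (Finset.mem_filter.1 hjI).2

/-- Every nonzero element of the span of subpartition indicators has Φ₁ bounded by
the max of the parts' expansions. -/
lemma CFPhi1_le_of_mem_span {ι : Type*} [Fintype ι] [DecidableEq ι] {A : ι → Finset V}
    (hμ : ∀ v, 0 < μ v) (hw : ∀ e ∈ G.edgeSet, 0 < w e)
    (hne : ∀ i, (A i).Nonempty) (hd : ∀ i j, i ≠ j → Disjoint (A i) (A j))
    {r : ℝ} (hr : ∀ i, phi G μ w (A i) ≤ r)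
    {x : V → ℝ} (hx : x ∈ Submodule.span ℝ (Set.range (fun i => indVec (A i))))
    (hx0 : x ≠ 0) :
    Phi1 G μ w x ≤ r := by
  obtain ⟨c, hc1, hc2⟩ := CFspan_values hd hx
  have key : ∀ (z : V → ℝ) (d : ι → ℝ), z ≠ 0 → (∀ v, 0 ≤ z v) →
      (∀ j, ∀ v ∈ A j, z v = d j) → (∀ v, (∀ j, v ∉ A j) → z v = 0) →
      Phi1 G μ w z ≤ r := by
    intro z d hz0 hz0' hzd hz00
    refine (CFlayer hμ hw _ z (le_refl _) hz0' hz0 r 0 ?_ ?_).2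
    · intro cc hcc hne'
      rw [CFsuperlevel_biUnion hzd hz00 hcc] at hne' ⊢
      obtain ⟨v, hv⟩ := hne'
      obtain ⟨i, hi, _⟩ := Finset.mem_biUnion.1 hv
      exact CFphi_biUnion_le hμ hw hne hd hr _ ⟨i, hi⟩
    · intro cc hcc hne'
      exact CFphi_nonneg hμ hw _
  refine (CFPhi1_split hμ hx0 (r := r) (h := 0) ?_).2
  rintro z hz (rfl | rfl)
  · refine ⟨CFPhi1_nonneg hμ hw _, key _ (fun i => max (c i) 0) hz
      (fun v => le_max_right _ _) (fun j v hv => by rw [hc1 j v hv])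
      (fun v hv => by rw [hc2 v hv]; simp)⟩
  · refine ⟨CFPhi1_nonneg hμ hw _, key _ (fun i => max (-(c i)) 0) hz
      (fun v => le_max_right _ _) (fun j v hv => by rw [hc1 j v hv])
      (fun v hv => by rw [hc2 v hv]; simp)⟩

/-- Every nonzero vector supported in a set all of whose nonempty subsets have φ ≥ hval
has Φ₁ ≥ hval. -/
lemma CFle_Phi1_of_support (hμ : ∀ v, 0 < μ v) (hw : ∀ e ∈ G.edgeSet, 0 < w e)
    {A' : Finset V} {hval : ℝ} (hval0 : 0 ≤ hval)
    (hA : ∀ B : Finset V, B ⊆ A' → B.Nonempty → hval ≤ phi G μ w B)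
    {x : V → ℝ} (hsupp : ∀ v, v ∉ A' → x v = 0) (hx0 : x ≠ 0) :
    hval ≤ Phi1 G μ w x := by
  set R : ℝ := sSup (Set.range (phi G μ w)) with hRdef
  have hbdd : BddAbove (Set.range (phi G μ w)) := (Set.finite_range _).bddAbove
  have key : ∀ z : V → ℝ, z ≠ 0 → (∀ v, 0 ≤ z v) → (∀ v, v ∉ A' → z v = 0) →
      hval ≤ Phi1 G μ w z ∧ Phi1 G μ w z ≤ R := by
    intro z hz0 hz1 hz2
    have hconj := CFlayer hμ hw _ z (le_refl _) hz1 hz0 R hval ?_ ?_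
    · exact ⟨hconj.1, hconj.2⟩
    · intro cc hcc hne'
      exact le_csSup hbdd ⟨_, rfl⟩
    · intro cc hcc hne'
      refine hA _ ?_ hne'
      intro v hv
      have hcz := (Finset.mem_filter.1 hv).2
      by_contra hvA
      rw [hz2 v hvA] at hcz; linarith
  refine (CFPhi1_split hμ hx0 (r := R) (h := hval) ?_).1
  rintro z hz (rfl | rfl)
  · exact key _ hz (fun v => le_max_right _ _)
      (fun v hv => by rw [hsupp v hv]; simp)
  · exact key _ hz (fun v => le_max_right _ _)
      (fun v hv => by rw [hsupp v hv]; simp)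

lemma CFlinind {ι : Type*} [Fintype ι] {A : ι → Finset V} (hne : ∀ i, (A i).Nonempty)
    (hd : ∀ i j, i ≠ j → Disjoint (A i) (A j)) :
    LinearIndependent ℝ (fun i => indVec (A i) : ι → V → ℝ) := by
  rw [Fintype.linearIndependent_iff]
  intro g hg i
  obtain ⟨v, hv⟩ := hne i
  have h1 := congrFun hg v
  rw [Finset.sum_apply] at h1
  simp only [Pi.smul_apply, smul_eq_mul, Pi.zero_apply] at h1
  rw [Finset.sum_eq_single i] at h1
  · simpa [indVec, hv] using h1
  · intro j _ hji
    have : v ∉ A j := Finset.disjoint_right.1 (hd j i hji) hv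
    simp [indVec, this]
  · intro hj; exact absurd (Finset.mem_univ i) hj

lemma CFfinrank_span {ι : Type*} [Fintype ι] {A : ι → Finset V} (hne : ∀ i, (A i).Nonempty)
    (hd : ∀ i j, i ≠ j → Disjoint (A i) (A j)) :
    Module.finrank ℝ (Submodule.span ℝ (Set.range (fun i => indVec (A i)))) = Fintype.card ι :=
  finrank_span_eq_card (CFlinind hne hd)

lemma CFmem_span_singletons {A' : Finset V} {x : V → ℝ}
    (hx : x ∈ Submodule.span ℝ (Set.range (fun a : {a // a ∈ A'} => indVec {a.1}))) :
    ∀ v, v ∉ A' → x v = 0 := by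
  intro v hv
  have hd : ∀ i j : {a // a ∈ A'}, i ≠ j → Disjoint ({i.1} : Finset V) {j.1} :=
    fun i j hij => Finset.disjoint_singleton.2 (fun h => hij (Subtype.ext h))
  obtain ⟨c, _, hc2⟩ := CFspan_values hd hx
  refine hc2 v fun a => ?_
  rw [Finset.mem_singleton]
  intro h; exact hv (h ▸ a.2)

lemma CFinter (X Y : Submodule ℝ (V → ℝ))
    (hsum : Fintype.card V + 1 ≤ Module.finrank ℝ X + Module.finrank ℝ Y) :
    ∃ x : V → ℝ, x ∈ X ∧ x ∈ Y ∧ x ≠ 0 := by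
  have h1 := Submodule.finrank_sup_add_finrank_inf_eq X Y
  have h2 : Module.finrank ℝ ↥(X ⊔ Y) ≤ Fintype.card V := by
    have h := Submodule.finrank_le (X ⊔ Y)
    rwa [Module.finrank_fintype_fun_eq_card] at h
  have h3 : 1 ≤ Module.finrank ℝ ↥(X ⊓ Y) := by omega
  have h4 : X ⊓ Y ≠ ⊥ := by
    intro hbot
    rw [hbot, finrank_bot] at h3; omega
  obtain ⟨x, hx, hx0⟩ := Submodule.exists_mem_ne_zero_of_ne_bot h4
  exact ⟨x, hx.1, hx.2, hx0⟩

lemma CFPhi1_bound (hμ : ∀ v, 0 < μ v) (hw : ∀ e ∈ G.edgeSet, 0 < w e) :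
    ∃ Cb : ℝ, ∀ x : V → ℝ, x ≠ 0 → Phi1 G μ w x ≤ Cb := by
  by_cases hV : Nonempty V
  · have hmne : (Finset.univ.image μ).Nonempty := by
      obtain ⟨v⟩ := hV
      exact ⟨μ v, Finset.mem_image.2 ⟨v, Finset.mem_univ v, rfl⟩⟩
    set m : ℝ := (Finset.univ.image μ).min' hmne with hmdef
    have hmle : ∀ v, m ≤ μ v := fun v =>
      Finset.min'_le _ _ (Finset.mem_image.2 ⟨v, Finset.mem_univ v, rfl⟩)
    have hmpos : 0 < m := by
      obtain ⟨v, _, hv⟩ := Finset.mem_image.1 ((Finset.univ.image μ).min'_mem hmne)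
      rw [hmdef, ← hv]; exact hμ v
    set W : ℝ := ∑ u, ∑ v, (if G.Adj u v then w s(u, v) else 0) with hWdef
    have hW0 : 0 ≤ W := by
      refine Finset.sum_nonneg fun u _ => Finset.sum_nonneg fun v _ => ?_
      split
      · exact (CFw_adj_pos hw (by assumption)).le
      · exact le_refl 0
    refine ⟨W / (2 * m), fun x hx => ?_⟩
    set s : ℝ := ∑ v, |x v| with hsdef
    have hspos : 0 < s := by
      obtain ⟨v, hv⟩ : ∃ v, x v ≠ 0 := by
        by_contra hcon; push_neg at hcon; exact hx (funext fun v => hcon v)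
      exact Finset.sum_pos' (fun i _ => abs_nonneg _) ⟨v, Finset.mem_univ v, abs_pos.2 hv⟩
    have hnum : CFnum G w x ≤ W * s := by
      rw [hWdef, Finset.sum_mul]
      refine Finset.sum_le_sum fun u _ => ?_
      rw [Finset.sum_mul]
      refine Finset.sum_le_sum fun v _ => ?_
      by_cases hadj : G.Adj u v
      · simp only [if_pos hadj]
        refine mul_le_mul_of_nonneg_left ?_ (CFw_adj_pos hw hadj).le
        refine le_trans (abs_sub _ _) ?_
        exact Finset.add_le_sum (fun i _ => abs_nonneg (x i))
          (Finset.mem_univ u) (Finset.mem_univ v) (G.ne_of_adj hadj)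
      · simp [hadj]
    have hden : m * s ≤ CFden μ x := by
      rw [hsdef, Finset.mul_sum]
      exact Finset.sum_le_sum fun v _ => mul_le_mul_of_nonneg_right (hmle v) (abs_nonneg _)
    have hfin : (W * s / 2) / (m * s) = W / (2 * m) := by
      field_simp
    calc Phi1 G μ w x = (CFnum G w x / 2) / CFden μ x := CFPhi1_eq G μ w x
      _ ≤ (W * s / 2) / (m * s) := by
          refine div_le_div₀ (by positivity) (by linarith) (by positivity) hden
      _ = W / (2 * m) := hfin
  · exact ⟨0, fun x hx => absurd (funext fun v => absurd ⟨v⟩ hV) hx⟩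

end Split

section Forest
variable [Fintype V] [DecidableEq V] {G : SimpleGraph V} [DecidableRel G.Adj]
  {μ : V → ℝ} {w : Sym2 V → ℝ}

/-- connectivity of a finite vertex set inside G -/
def CFConn (G : SimpleGraph V) (B : Finset V) : Prop :=
  ∀ x ∈ B, ∀ y ∈ B, ∃ p : G.Walk x y, ∀ z ∈ p.support, z ∈ B

lemma CFpath_in {B : Finset V} (hB : CFConn G B) {x y : V} (hx : x ∈ B) (hy : y ∈ B) :
    ∃ p : G.Walk x y, p.IsPath ∧ ∀ z ∈ p.support, z ∈ B := by
  obtain ⟨p, hp⟩ := hB x hx y hy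
  exact ⟨p.bypass, p.bypass_isPath, fun z hz => hp z (p.support_bypass_subset hz)⟩

/-- every nonempty set contains a nonempty connected subset with no larger expansion -/
lemma CFcheap_conn_subset (hμ : ∀ v, 0 < μ v) (hw : ∀ e ∈ G.edgeSet, 0 < w e) :
    ∀ (n : ℕ) (A : Finset V), A.card ≤ n → A.Nonempty →
    ∃ C, C ⊆ A ∧ C.Nonempty ∧ CFConn G C ∧ phi G μ w C ≤ phi G μ w A := by
  intro n
  induction n with
  | zero =>
    intro A hA hAne
    exact absurd (Finset.card_pos.2 hAne) (by omega)
  | succ n ih =>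
    intro A hcard hAne
    classical
    obtain ⟨x₀, hx₀⟩ := hAne
    set C : Finset V := A.filter (fun v => ∃ p : G.Walk x₀ v, ∀ z ∈ p.support, z ∈ A)
      with hCdef
    have hCA : C ⊆ A := Finset.filter_subset _ _
    have hx₀C : x₀ ∈ C := by
      refine Finset.mem_filter.2 ⟨hx₀, ⟨SimpleGraph.Walk.nil, fun z hz => ?_⟩⟩
      rw [SimpleGraph.Walk.support_nil] at hz
      rwa [List.mem_singleton.1 hz]
    have hCne : C.Nonempty := ⟨x₀, hx₀C⟩
    have hnoedge : ∀ u ∈ C, ∀ v ∈ A \ C, ¬ G.Adj u v := by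
      intro u hu v hv hadj
      obtain ⟨huA, p, hp⟩ := Finset.mem_filter.1 hu
      have hvC : v ∈ C := by
        refine Finset.mem_filter.2 ⟨(Finset.mem_sdiff.1 hv).1, ⟨p.concat hadj, fun z hz => ?_⟩⟩
        rw [SimpleGraph.Walk.support_concat, List.mem_append] at hz
        rcases hz with hz | hz
        · exact hp z hz
        · rw [List.mem_singleton.1 hz]; exact (Finset.mem_sdiff.1 hv).1
      exact (Finset.mem_sdiff.1 hv).2 hvC
    have hCconn : CFConn G C := by
      intro u hu v hv
      obtain ⟨huA, p, hp⟩ := Finset.mem_filter.1 hu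
      obtain ⟨hvA, q, hq⟩ := Finset.mem_filter.1 hv
      refine ⟨p.reverse.append q, fun z hz => ?_⟩
      rw [SimpleGraph.Walk.support_append, List.mem_append] at hz
      have hzmem : z ∈ p.support ∨ z ∈ q.support := by
        rcases hz with hz | hz
        · rw [SimpleGraph.Walk.support_reverse, List.mem_reverse] at hz; exact Or.inl hz
        · exact Or.inr (List.mem_of_mem_tail hz)
      rcases hzmem with hz' | hz'
      · refine Finset.mem_filter.2 ⟨hp z hz', ⟨p.takeUntil z hz', fun z' hz'' => ?_⟩⟩
        exact hp z' (p.support_takeUntil_subset hz' hz'')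
      · refine Finset.mem_filter.2 ⟨hq z hz', ⟨q.takeUntil z hz', fun z' hz'' => ?_⟩⟩
        exact hq z' (q.support_takeUntil_subset hz' hz'')
    by_cases hAC : A ⊆ C
    · have hCeq : C = A := Finset.Subset.antisymm hCA hAC
      exact ⟨C, hCA, hCne, hCconn, by rw [hCeq]⟩
    · have hDne : (A \ C).Nonempty := by
        obtain ⟨y, hy⟩ := Finset.not_subset.1 hAC
        exact ⟨y, Finset.mem_sdiff.2 ⟨hy.1, hy.2⟩⟩
      have hsplit : C ∪ (A \ C) = A := Finset.union_sdiff_of_subset hCA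
      have hdisj : Disjoint C (A \ C) := Finset.disjoint_sdiff
      have hmin := CFle_phi_union (G := G) (w := w) hμ hdisj hCne hDne hnoedge
      rw [hsplit] at hmin
      rcases le_total (phi G μ w C) (phi G μ w (A \ C)) with hle | hle
      · rw [min_eq_left hle] at hmin
        exact ⟨C, hCA, hCne, hCconn, hmin⟩
      · rw [min_eq_right hle] at hmin
        have hsslt : A \ C ⊂ A := by
          refine Finset.ssubset_iff_of_subset (Finset.sdiff_subset) |>.2 ?_
          exact ⟨x₀, hx₀, fun h => (Finset.mem_sdiff.1 h).2 hx₀C⟩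
        have hcard' : (A \ C).card ≤ n := by
          have := Finset.card_lt_card hsslt
          omega
        obtain ⟨C', hC'sub, hC'ne, hC'conn, hC'phi⟩ := ih (A \ C) hcard' hDne
        exact ⟨C', hC'sub.trans Finset.sdiff_subset, hC'ne, hC'conn, hC'phi.trans hmin⟩

/-- an internal vertex of a path has two distinct neighbours on the path -/
lemma CFinternal {u : V} : ∀ {x y : V} (p : G.Walk x y), p.IsPath → u ∈ p.support →
    u ≠ x → u ≠ y →
    ∃ a b, a ≠ b ∧ a ∈ p.support ∧ b ∈ p.support ∧ G.Adj u a ∧ G.Adj u b := by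
  intro x y p
  induction p with
  | nil =>
    intro _ hu hux _
    rw [SimpleGraph.Walk.support_nil] at hu
    exact absurd (List.mem_singleton.1 hu) hux
  | @cons x x' y h q ih =>
    intro hp hu hux huy
    rw [SimpleGraph.Walk.support_cons, List.mem_cons] at hu
    rcases hu with rfl | hu'
    · exact absurd rfl hux
    · by_cases hux' : u = x'
      · subst hux'
        cases q with
        | nil => exact absurd rfl huy
        | @cons _ x'' _ h2 q2 =>
          refine ⟨x, x'', ?_, ?_, ?_, h.symm, h2⟩
          · intro hxx
            have hxnot : x ∉ (SimpleGraph.Walk.cons h2 q2).support :=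
              ((SimpleGraph.Walk.cons_isPath_iff _ _).1 hp).2
            apply hxnot
            rw [hxx, SimpleGraph.Walk.support_cons]
            exact List.mem_cons_of_mem _ q2.start_mem_support
          · rw [SimpleGraph.Walk.support_cons]
            exact List.mem_cons_self
          · rw [SimpleGraph.Walk.support_cons, SimpleGraph.Walk.support_cons]
            exact List.mem_cons_of_mem _ (List.mem_cons_of_mem _ q2.start_mem_support)
      · have hq := ((SimpleGraph.Walk.cons_isPath_iff _ _).1 hp).1
        obtain ⟨a, b, hab, ha, hb, h1, h2⟩ := ih hq hu' hux' huy
        refine ⟨a, b, hab, ?_, ?_, h1, h2⟩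
        · rw [SimpleGraph.Walk.support_cons]; exact List.mem_cons_of_mem _ ha
        · rw [SimpleGraph.Walk.support_cons]; exact List.mem_cons_of_mem _ hb

/-- a connected set with at least two points containing u contains a neighbour of u -/
lemma CFconn_neighbor {B : Finset V} (hB : CFConn G B) {u : V} (hu : u ∈ B)
    (hB2 : B ≠ {u}) : ∃ z ∈ B, G.Adj u z := by
  obtain ⟨v, hv, hvu⟩ : ∃ v ∈ B, v ≠ u := by
    by_contra hcon; push_neg at hcon
    apply hB2
    ext z
    simp only [Finset.mem_singleton]
    exact ⟨fun hz => hcon z hz, fun hz => hz ▸ hu⟩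
  obtain ⟨p, hp, hpB⟩ := CFpath_in hB hu hv
  cases p with
  | nil => exact absurd rfl hvu
  | @cons _ x' _ h q =>
    refine ⟨x', hpB x' ?_, h⟩
    rw [SimpleGraph.Walk.support_cons]
    exact List.mem_cons_of_mem _ q.start_mem_support

/-- removing a leaf of U keeps subsets of U connected -/
lemma CFconn_erase {B U : Finset V} (hBU : B ⊆ U) (hB : CFConn G B) {u : V}
    (hleaf : ∀ a ∈ U, ∀ b ∈ U, G.Adj u a → G.Adj u b → a = b) :
    CFConn G (B.erase u) := by
  intro x hx y hy
  have hxB := Finset.mem_of_mem_erase hx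
  have hyB := Finset.mem_of_mem_erase hy
  obtain ⟨p, hp, hpB⟩ := CFpath_in hB hxB hyB
  refine ⟨p, fun z hz => ?_⟩
  refine Finset.mem_erase.2 ⟨?_, hpB z hz⟩
  intro hzu
  subst hzu
  obtain ⟨a, b, hab, ha, hb, h1, h2⟩ := CFinternal p hp hz
    (Ne.symm (Finset.mem_erase.1 hx).1) (Ne.symm (Finset.mem_erase.1 hy).1)
  exact hab (hleaf a (hBU (hpB a ha)) b (hBU (hpB b hb)) h1 h2)

lemma CFpath_edge_unique {y t a b : V} (r : G.Walk y t) (hr : r.IsPath)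
    (ha : s(y, a) ∈ r.edges) (hb : s(y, b) ∈ r.edges) : a = b := by
  cases r with
  | nil => simp [SimpleGraph.Walk.edges_nil] at ha
  | @cons _ x' _ h q =>
    rw [SimpleGraph.Walk.edges_cons, List.mem_cons] at ha hb
    have key : ∀ c, (s(y, c) = s(y, x') ∨ s(y, c) ∈ q.edges) → c = x' := by
      intro c hc
      rcases hc with hc | hc
      · exact Sym2.congr_right.1 hc
      · exfalso
        have hy' : y ∈ q.support := q.fst_mem_support_of_mem_edges hc
        exact ((SimpleGraph.Walk.cons_isPath_iff _ _).1 hr).2 hy'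
    rw [key a ha, key b hb]

/-- a nonempty subset of an acyclic graph has a vertex with at most one neighbour in it -/
lemma CFexists_leaf (hG : G.IsAcyclic) {U : Finset V} (hU : U.Nonempty) :
    ∃ u ∈ U, ∀ a ∈ U, ∀ b ∈ U, G.Adj u a → G.Adj u b → a = b := by
  classical
  set L : Set ℕ := {n | ∃ (x y : V) (p : G.Walk x y), p.IsPath ∧
    (∀ z ∈ p.support, z ∈ U) ∧ p.length = n} with hLdef
  obtain ⟨u₀, hu₀⟩ := hU
  have hLne : L.Nonempty := by
    refine ⟨0, u₀, u₀, SimpleGraph.Walk.nil, SimpleGraph.Walk.IsPath.nil, fun z hz => ?_, rfl⟩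
    rw [SimpleGraph.Walk.support_nil] at hz
    rwa [List.mem_singleton.1 hz]
  have hLbdd : BddAbove L := by
    refine ⟨Fintype.card V, fun n hn => ?_⟩
    obtain ⟨x, y, p, hp, _, hlen⟩ := hn
    exact hlen ▸ hp.length_lt.le
  obtain ⟨x, y, p, hp, hpU, hlen⟩ := Nat.sSup_mem hLne hLbdd
  refine ⟨y, hpU y p.end_mem_support, ?_⟩
  have hedge : ∀ z ∈ U, G.Adj y z → s(y, z) ∈ p.edges := by
    intro z hzU hadj
    by_cases hzp : z ∈ p.support
    · have hq : (p.dropUntil z hzp).IsPath := hp.dropUntil hzp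
      have hnc : ¬ (SimpleGraph.Walk.cons hadj (p.dropUntil z hzp)).IsCycle := hG _
      rw [SimpleGraph.Walk.cons_isCycle_iff] at hnc
      push_neg at hnc
      exact p.edges_dropUntil_subset hzp (hnc hq)
    · exfalso
      have hp'path : (SimpleGraph.Walk.cons hadj.symm p.reverse).IsPath := by
        rw [SimpleGraph.Walk.cons_isPath_iff]
        refine ⟨hp.reverse, ?_⟩
        rwa [SimpleGraph.Walk.support_reverse, List.mem_reverse]
      have hp'U : ∀ z' ∈ (SimpleGraph.Walk.cons hadj.symm p.reverse).support, z' ∈ U := by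
        intro z' hz'
        rw [SimpleGraph.Walk.support_cons, List.mem_cons] at hz'
        rcases hz' with rfl | hz'
        · exact hzU
        · rw [SimpleGraph.Walk.support_reverse, List.mem_reverse] at hz'
          exact hpU _ hz'
      have hmemL : (SimpleGraph.Walk.cons hadj.symm p.reverse).length ∈ L :=
        ⟨z, x, _, hp'path, hp'U, rfl⟩
      have hle := le_csSup hLbdd hmemL
      rw [SimpleGraph.Walk.length_cons, SimpleGraph.Walk.length_reverse, ← hlen] at hle
      exact Nat.not_succ_le_self _ hle
  intro a ha b hb hadja hadjb
  have hea : s(y, a) ∈ p.reverse.edges := by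
    rw [SimpleGraph.Walk.edges_reverse, List.mem_reverse]; exact hedge a ha hadja
  have heb : s(y, b) ∈ p.reverse.edges := by
    rw [SimpleGraph.Walk.edges_reverse, List.mem_reverse]; exact hedge b hb hadjb
  exact CFpath_edge_unique p.reverse hp.reverse hea heb

end Forest

section Transversal
variable [Fintype V] [DecidableEq V] {G : SimpleGraph V} [DecidableRel G.Adj]
  {μ : V → ℝ} {w : Sym2 V → ℝ}

/-- ν = τ for families of connected sets in a forest -/
lemma CFtransversal (hG : G.IsAcyclic) :
    ∀ (n : ℕ) (U : Finset V), U.card ≤ n → ∀ (k : ℕ) (F : Set (Finset V)),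
    (∀ B ∈ F, B.Nonempty ∧ CFConn G B ∧ B ⊆ U) →
    (¬ ∃ Bs : Fin k → Finset V, (∀ i, Bs i ∈ F) ∧ ∀ i j, i ≠ j → Disjoint (Bs i) (Bs j)) →
    ∃ D : Finset V, D.card + 1 ≤ k ∧ ∀ B ∈ F, ∃ v ∈ D, v ∈ B := by
  intro n
  induction n with
  | zero =>
    intro U hU k F hF hno
    have hU0 : U = ∅ := Finset.card_eq_zero.1 (le_antisymm hU (Nat.zero_le _))
    cases k with
    | zero => exact absurd ⟨Fin.elim0, fun i => i.elim0, fun i j _ => i.elim0⟩ hno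
    | succ k =>
      refine ⟨∅, by simp, fun B hB => ?_⟩
      obtain ⟨⟨v, hv⟩, _, hBU⟩ := hF B hB
      rw [hU0] at hBU
      exact absurd (hBU hv) (Finset.notMem_empty v)
  | succ n ih =>
    intro U hU k F hF hno
    cases k with
    | zero => exact absurd ⟨Fin.elim0, fun i => i.elim0, fun i j _ => i.elim0⟩ hno
    | succ k =>
    by_cases hFne : F = ∅
    · exact ⟨∅, by simp, fun B hB => absurd hB (hFne ▸ Set.notMem_empty B)⟩
    · obtain ⟨B₀, hB₀⟩ := Set.nonempty_iff_ne_empty.2 hFne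
      have hUne : U.Nonempty := by
        obtain ⟨⟨v, hv⟩, _, hBU⟩ := hF _ hB₀
        exact ⟨v, hBU hv⟩
      obtain ⟨u, huU, hleaf⟩ := CFexists_leaf hG hUne
      have hUcard : (U.erase u).card ≤ n := by
        rw [Finset.card_erase_of_mem huU]
        have := Finset.card_pos.2 hUne
        omega
      by_cases hsing : ({u} : Finset V) ∈ F
      · -- the singleton {u} is a member: u must be in the transversal
        set F' : Set (Finset V) := {B | B ∈ F ∧ u ∉ B} with hF'def
        have hF' : ∀ B ∈ F', B.Nonempty ∧ CFConn G B ∧ B ⊆ U.erase u := by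
          rintro B ⟨hBF, hBu⟩
          obtain ⟨h1, h2, h3⟩ := hF B hBF
          exact ⟨h1, h2, fun z hz => Finset.mem_erase.2 ⟨fun h => hBu (h ▸ hz), h3 hz⟩⟩
        have hno' : ¬ ∃ Bs : Fin k → Finset V,
            (∀ i, Bs i ∈ F') ∧ ∀ i j, i ≠ j → Disjoint (Bs i) (Bs j) := by
          rintro ⟨Bs, hBs1, hBs2⟩
          refine hno ⟨Fin.cons {u} Bs, ?_, ?_⟩
          · intro i
            induction i using Fin.cases with
            | zero => simpa using hsing
            | succ j => simpa using (hBs1 j).1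
          · intro i j hij
            induction i using Fin.cases with
            | zero =>
              induction j using Fin.cases with
              | zero => exact absurd rfl hij
              | succ j' =>
                simp only [Fin.cons_zero, Fin.cons_succ]
                exact Finset.disjoint_singleton_left.2 (hBs1 j').2
            | succ i' =>
              induction j using Fin.cases with
              | zero =>
                simp only [Fin.cons_zero, Fin.cons_succ]
                exact (Finset.disjoint_singleton_left.2 (hBs1 i').2).symm
              | succ j' =>
                simp only [Fin.cons_succ]
                exact hBs2 i' j' (fun h => hij (h ▸ rfl))
        obtain ⟨D', hD'1, hD'2⟩ := ih (U.erase u) hUcard k F' hF' hno'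
        refine ⟨insert u D', ?_, fun B hB => ?_⟩
        · have := Finset.card_insert_le u D'
          omega
        · by_cases hu : u ∈ B
          · exact ⟨u, Finset.mem_insert_self _ _, hu⟩
          · obtain ⟨v, hvD, hvB⟩ := hD'2 B ⟨hB, hu⟩
            exact ⟨v, Finset.mem_insert_of_mem hvD, hvB⟩
      · -- no member is the singleton {u}: erase u from all members
        set F'' : Set (Finset V) := (fun B => B.erase u) '' F with hF''def
        have hF'' : ∀ B' ∈ F'', B'.Nonempty ∧ CFConn G B' ∧ B' ⊆ U.erase u := by
          rintro B' ⟨B, hBF, rfl⟩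
          obtain ⟨h1, h2, h3⟩ := hF B hBF
          refine ⟨?_, CFconn_erase h3 h2 hleaf, fun z hz =>
            Finset.mem_erase.2 ⟨(Finset.mem_erase.1 hz).1, h3 (Finset.mem_of_mem_erase hz)⟩⟩
          show (B.erase u).Nonempty
          by_cases hu : u ∈ B
          · have hBne : B ≠ {u} := fun h => hsing (h ▸ hBF)
            obtain ⟨z, hz, hzu⟩ : ∃ z ∈ B, z ≠ u := by
              by_contra hcon; push_neg at hcon
              refine hBne ?_
              ext z
              simp only [Finset.mem_singleton]
              exact ⟨fun hz => hcon z hz, fun hz => hz ▸ hu⟩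
            exact ⟨z, Finset.mem_erase.2 ⟨hzu, hz⟩⟩
          · rw [Finset.erase_eq_of_notMem hu]; exact h1
        have hno'' : ¬ ∃ Bs : Fin (k + 1) → Finset V,
            (∀ i, Bs i ∈ F'') ∧ ∀ i j, i ≠ j → Disjoint (Bs i) (Bs j) := by
          rintro ⟨Bs, hBs1, hBs2⟩
          choose C hCF hCe using fun i => hBs1 i
          refine hno ⟨C, hCF, fun i j hij => ?_⟩
          rw [Finset.disjoint_left]
          intro z hzi hzj
          by_cases hzu : z = u
          · rw [hzu] at hzi hzj
            have hCi : C i ≠ {u} := fun h => hsing (h ▸ hCF i)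
            have hCj : C j ≠ {u} := fun h => hsing (h ▸ hCF j)
            obtain ⟨h1i, h2i, h3i⟩ := hF _ (hCF i)
            obtain ⟨h1j, h2j, h3j⟩ := hF _ (hCF j)
            obtain ⟨zi, hziC, hziadj⟩ := CFconn_neighbor h2i hzi hCi
            obtain ⟨zj, hzjC, hzjadj⟩ := CFconn_neighbor h2j hzj hCj
            have hzz : zi = zj := hleaf zi (h3i hziC) zj (h3j hzjC) hziadj hzjadj
            have hne_u : zi ≠ u := fun h => (G.ne_of_adj hziadj) (h.symm)
            have hm1 : zi ∈ Bs i := by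
              rw [← hCe i]; exact Finset.mem_erase.2 ⟨hne_u, hziC⟩
            have hm2 : zi ∈ Bs j := by
              rw [← hCe j]; exact Finset.mem_erase.2 ⟨hne_u, hzz ▸ hzjC⟩
            exact Finset.disjoint_left.1 (hBs2 i j hij) hm1 hm2
          · have hm1 : z ∈ Bs i := by
              rw [← hCe i]; exact Finset.mem_erase.2 ⟨hzu, hzi⟩
            have hm2 : z ∈ Bs j := by
              rw [← hCe j]; exact Finset.mem_erase.2 ⟨hzu, hzj⟩
            exact Finset.disjoint_left.1 (hBs2 i j hij) hm1 hm2
        obtain ⟨D, hD1, hD2⟩ := ih (U.erase u) hUcard (k + 1) F'' hF'' hno''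
        refine ⟨D, hD1, fun B hB => ?_⟩
        obtain ⟨v, hvD, hvB⟩ := hD2 (B.erase u) ⟨B, hB, rfl⟩
        exact ⟨v, hvD, Finset.mem_of_mem_erase hvB⟩

/-- existence of a large set all of whose nonempty subsets are expanding -/
lemma CFgood_set (hG : G.IsAcyclic) (hμ : ∀ v, 0 < μ v) (hw : ∀ e ∈ G.edgeSet, 0 < w e)
    {k : ℕ} (hkn : k ≤ Fintype.card V) {h : ℝ}
    (hno : ¬ ∃ Bs : Fin k → Finset V, (∀ i, (Bs i).Nonempty ∧ phi G μ w (Bs i) < h) ∧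
      ∀ i j, i ≠ j → Disjoint (Bs i) (Bs j)) :
    ∃ A' : Finset V, A'.card = Fintype.card V - k + 1 ∧
      ∀ B ⊆ A', B.Nonempty → h ≤ phi G μ w B := by
  classical
  set F : Set (Finset V) := {B | B.Nonempty ∧ CFConn G B ∧ phi G μ w B < h} with hFdef
  have hF : ∀ B ∈ F, B.Nonempty ∧ CFConn G B ∧ B ⊆ Finset.univ :=
    fun B hB => ⟨hB.1, hB.2.1, Finset.subset_univ B⟩
  have hnoF : ¬ ∃ Bs : Fin k → Finset V,
      (∀ i, Bs i ∈ F) ∧ ∀ i j, i ≠ j → Disjoint (Bs i) (Bs j) := by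
    rintro ⟨Bs, h1, h2⟩
    exact hno ⟨Bs, fun i => ⟨(h1 i).1, (h1 i).2.2⟩, h2⟩
  obtain ⟨D, hD1, hD2⟩ := CFtransversal hG (Fintype.card V) Finset.univ
    (by rw [Finset.card_univ]) k F hF hnoF
  have hcard : Fintype.card V - k + 1 ≤ (Finset.univ \ D).card := by
    rw [Finset.card_sdiff_of_subset (Finset.subset_univ D), Finset.card_univ]
    omega
  obtain ⟨A', hA'sub, hA'card⟩ := Finset.exists_subset_card_eq hcard
  refine ⟨A', hA'card, fun B hBA hBne => ?_⟩
  by_contra hcon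
  push_neg at hcon
  obtain ⟨C, hCB, hCne, hCconn, hCphi⟩ := CFcheap_conn_subset hμ hw B.card B (le_refl _) hBne
  have hCF : C ∈ F := ⟨hCne, hCconn, lt_of_le_of_lt hCphi hcon⟩
  obtain ⟨v, hvD, hvC⟩ := hD2 C hCF
  have hv1 : v ∈ A' := hBA (hCB hvC)
  exact (Finset.mem_sdiff.1 (hA'sub hv1)).2 hvD

end Transversal

theorem forest_nonlinear_courant_fischer [Fintype V] [DecidableEq V]
    (G : SimpleGraph V) [DecidableRel G.Adj] (hG : G.IsAcyclic)
    (μ : V → ℝ) (w : Sym2 V → ℝ) (hμ : ∀ v, 0 < μ v) (hw : ∀ e ∈ G.edgeSet, 0 < w e)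
    (k : ℕ) (hk : 1 ≤ k) (hkn : k ≤ Fintype.card V) :
    sInf {r | ∃ X : Submodule ℝ (V → ℝ), Module.finrank ℝ X = k ∧
        r = sSup {s | ∃ x : V → ℝ, x ∈ X ∧ x ≠ 0 ∧ s = Phi1 G μ w x}} = hkConst G μ w k ∧
      sSup {r | ∃ X : Submodule ℝ (V → ℝ), Module.finrank ℝ X = Fintype.card V - k + 1 ∧
        r = sInf {s | ∃ x : V → ℝ, x ∈ X ∧ x ≠ 0 ∧ s = Phi1 G μ w x}} = hkConst G μ w k := by
  classical
  have e1 : hkConst G μ w k = sInf {r | ∃ A : Fin k → Finset V, IsSubpartition A ∧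
      r = sSup {s | ∃ i, s = phi G μ w (A i)}} := rfl
  have hfin : {r | ∃ A : Fin k → Finset V, IsSubpartition A ∧
      r = sSup {s | ∃ i, s = phi G μ w (A i)}}.Finite := by
    refine Set.Finite.subset (Set.finite_range
      (fun A : Fin k → Finset V => sSup {s | ∃ i, s = phi G μ w (A i)})) ?_
    rintro r ⟨A, _, rfl⟩
    exact ⟨A, rfl⟩
  have hSetne : {r | ∃ A : Fin k → Finset V, IsSubpartition A ∧
      r = sSup {s | ∃ i, s = phi G μ w (A i)}}.Nonempty := by
    obtain ⟨e⟩ : Nonempty (Fin k ↪ V) := Function.Embedding.nonempty_iff_card_le.2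
      (by rwa [Fintype.card_fin])
    refine ⟨_, fun i => {e i}, ⟨fun i => Finset.singleton_nonempty _, fun i j hij =>
      Finset.disjoint_singleton.2 (fun h => hij (e.injective h))⟩, rfl⟩
  have hmem : hkConst G μ w k ∈ {r | ∃ A : Fin k → Finset V, IsSubpartition A ∧
      r = sSup {s | ∃ i, s = phi G μ w (A i)}} := by
    rw [e1]
    exact Set.Nonempty.csInf_mem hSetne hfin
  obtain ⟨Astar, hAsub, hAeq⟩ := hmem
  have hinner_fin : {s | ∃ i, s = phi G μ w (Astar i)}.Finite := by
    refine Set.Finite.subset (Set.finite_range (fun i => phi G μ w (Astar i))) ?_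
    rintro s ⟨i, rfl⟩
    exact ⟨i, rfl⟩
  have hinner_ne : {s | ∃ i, s = phi G μ w (Astar i)}.Nonempty :=
    ⟨_, ⟨(⟨0, hk⟩ : Fin k), rfl⟩⟩
  have hAle : ∀ i, phi G μ w (Astar i) ≤ (hkConst G μ w k) := by
    intro i
    rw [hAeq]
    exact le_csSup hinner_fin.bddAbove ⟨i, rfl⟩
  have h0mem : ∃ i, (hkConst G μ w k) = phi G μ w (Astar i) := by
    rw [hAeq]
    exact Set.Nonempty.csSup_mem hinner_ne hinner_fin
  have h0nonneg : 0 ≤ (hkConst G μ w k) := by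
    obtain ⟨i, hi⟩ := h0mem
    rw [hi]
    exact CFphi_nonneg hμ hw _
  have hlow : ∀ Bs : Fin k → Finset V, IsSubpartition Bs →
      (hkConst G μ w k) ≤ sSup {s | ∃ i, s = phi G μ w (Bs i)} := by
    intro Bs hBs
    rw [e1]
    exact csInf_le hfin.bddBelow ⟨Bs, hBs, rfl⟩
  have hno : ¬ ∃ Bs : Fin k → Finset V, (∀ i, (Bs i).Nonempty ∧ phi G μ w (Bs i) < (hkConst G μ w k)) ∧
      ∀ i j, i ≠ j → Disjoint (Bs i) (Bs j) := by
    rintro ⟨Bs, h1, h2⟩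
    have hle := hlow Bs ⟨fun i => (h1 i).1, h2⟩
    have hfin' : {s | ∃ i, s = phi G μ w (Bs i)}.Finite := by
      refine Set.Finite.subset (Set.finite_range (fun i => phi G μ w (Bs i))) ?_
      rintro s ⟨i, rfl⟩
      exact ⟨i, rfl⟩
    have hne' : {s | ∃ i, s = phi G μ w (Bs i)}.Nonempty := ⟨_, ⟨(⟨0, hk⟩ : Fin k), rfl⟩⟩
    obtain ⟨i, hi⟩ := Set.Nonempty.csSup_mem hne' hfin'
    rw [hi] at hle
    exact absurd (h1 i).2 (not_lt.2 hle)
  obtain ⟨A', hA'card, hA'prop⟩ := CFgood_set hG hμ hw hkn hno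
  have hA'ne : A'.Nonempty := Finset.card_pos.1 (by rw [hA'card]; omega)
  set Xstar : Submodule ℝ (V → ℝ) :=
    Submodule.span ℝ (Set.range (fun i => indVec (Astar i))) with hXdef
  set Ystar : Submodule ℝ (V → ℝ) :=
    Submodule.span ℝ (Set.range (fun a : {a // a ∈ A'} => indVec {a.1})) with hYdef
  have hXrank : Module.finrank ℝ Xstar = k := by
    rw [hXdef, CFfinrank_span hAsub.1 hAsub.2, Fintype.card_fin]
  have hsing_ne : ∀ a : {a // a ∈ A'}, ({a.1} : Finset V).Nonempty :=
    fun a => Finset.singleton_nonempty _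
  have hsing_d : ∀ i j : {a // a ∈ A'}, i ≠ j → Disjoint ({i.1} : Finset V) {j.1} :=
    fun i j hij => Finset.disjoint_singleton.2 (fun h => hij (Subtype.ext h))
  have hYrank : Module.finrank ℝ Ystar = Fintype.card V - k + 1 := by
    rw [hYdef, CFfinrank_span hsing_ne hsing_d, Fintype.card_coe, hA'card]
  obtain ⟨Cb, hCb⟩ := CFPhi1_bound (G := G) (μ := μ) (w := w) hμ hw
  have hUP : ∀ x : V → ℝ, x ∈ Xstar → x ≠ 0 → Phi1 G μ w x ≤ (hkConst G μ w k) :=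
    fun x hx hx0 => CFPhi1_le_of_mem_span hμ hw hAsub.1 hAsub.2 hAle hx hx0
  have hLO : ∀ x : V → ℝ, x ∈ Ystar → x ≠ 0 → (hkConst G μ w k) ≤ Phi1 G μ w x :=
    fun x hx hx0 =>
      CFle_Phi1_of_support hμ hw h0nonneg hA'prop (CFmem_span_singletons hx) hx0
  constructor
  · -- min-max equality
    have hlb : ∀ r ∈ {r | ∃ X : Submodule ℝ (V → ℝ), Module.finrank ℝ X = k ∧
        r = sSup {s | ∃ x : V → ℝ, x ∈ X ∧ x ≠ 0 ∧ s = Phi1 G μ w x}}, (hkConst G μ w k) ≤ r := by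
      rintro r ⟨X, hXr, rfl⟩
      obtain ⟨x, hxX, hxY, hx0⟩ := CFinter X Ystar (by rw [hXr, hYrank]; omega)
      refine le_trans (hLO x hxY hx0) (le_csSup ?_ ⟨x, hxX, hx0, rfl⟩)
      exact ⟨Cb, by rintro s ⟨z, _, hz0, rfl⟩; exact hCb z hz0⟩
    have hSne : {s | ∃ x : V → ℝ, x ∈ Xstar ∧ x ≠ 0 ∧ s = Phi1 G μ w x}.Nonempty := by
      obtain ⟨v0, hv0⟩ := hAsub.1 (⟨0, hk⟩ : Fin k)
      refine ⟨_, indVec (Astar ⟨0, hk⟩), Submodule.subset_span ⟨_, rfl⟩, ?_, rfl⟩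
      intro hzero
      have := congrFun hzero v0
      simp [indVec, hv0] at this
    have hub : sSup {s | ∃ x : V → ℝ, x ∈ Xstar ∧ x ≠ 0 ∧ s = Phi1 G μ w x} ≤ (hkConst G μ w k) := by
      refine csSup_le hSne ?_
      rintro s ⟨x, hx, hx0, rfl⟩
      exact hUP x hx hx0
    exact le_antisymm (le_trans (csInf_le ⟨(hkConst G μ w k), hlb⟩ ⟨Xstar, hXrank, rfl⟩) hub)
      (le_csInf ⟨_, Xstar, hXrank, rfl⟩ hlb)
  · -- max-min equality
    have hub2 : ∀ r ∈ {r | ∃ X : Submodule ℝ (V → ℝ),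
        Module.finrank ℝ X = Fintype.card V - k + 1 ∧
        r = sInf {s | ∃ x : V → ℝ, x ∈ X ∧ x ≠ 0 ∧ s = Phi1 G μ w x}}, r ≤ (hkConst G μ w k) := by
      rintro r ⟨Y, hYr, rfl⟩
      obtain ⟨x, hxX, hxY, hx0⟩ := CFinter Xstar Y (by rw [hXrank, hYr]; omega)
      refine le_trans (csInf_le ?_ ⟨x, hxY, hx0, rfl⟩) (hUP x hxX hx0)
      exact ⟨0, by rintro s ⟨z, _, hz0, rfl⟩; exact CFPhi1_nonneg hμ hw z⟩
    have hYne : {s | ∃ x : V → ℝ, x ∈ Ystar ∧ x ≠ 0 ∧ s = Phi1 G μ w x}.Nonempty := by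
      obtain ⟨a0, ha0⟩ := hA'ne
      refine ⟨_, indVec {a0}, Submodule.subset_span ⟨⟨a0, ha0⟩, rfl⟩, ?_, rfl⟩
      intro hzero
      have := congrFun hzero a0
      simp [indVec] at this
    have hlb2 : (hkConst G μ w k) ≤ sInf {s | ∃ x : V → ℝ, x ∈ Ystar ∧ x ≠ 0 ∧ s = Phi1 G μ w x} := by
      refine le_csInf hYne ?_
      rintro s ⟨x, hx, hx0, rfl⟩
      exact hLO x hx hx0
    exact le_antisymm (csSup_le ⟨_, Ystar, hYrank, rfl⟩ hub2)
      (le_trans hlb2 (le_csSup ⟨(hkConst G μ w k), hub2⟩ ⟨Ystar, hYrank, rfl⟩))
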